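/- Let g(y) = (y/2)√((2y−1)(3−2y)) for y ∈ [1/2, 3/2] and let y* = (3+√3)/4. Then g is strictly increasing on [1/2, y*] and strictly decreasing on [y*, 3/2], and there is a unique function β : (1/2, y*) → (y*, 3/2) such that g(β(u)) = g(u) for all u ∈ (1/2, y*); moreover lim_{u → y*⁻} (β(u) − y*)/(u − y*) = −1. -/

import Mathlib

open Set Real Filter

/-- g(y) = (y/2)·√((2y−1)(3−2y)) of Example 6. -/
noncomputable def gEx6 (y : ℝ) : ℝ := y / 2 * Real.sqrt ((2 * y - 1) * (3 - 2 * y))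

/-- y* = (3+√3)/4. -/
noncomputable def ystar : ℝ := (3 + Real.sqrt 3) / 4

/- auxiliary polynomial Q = g², and the factor q. -/
noncomputable def Qp (y : ℝ) : ℝ := -y^4 + 2*y^3 - 3/4*y^2

noncomputable def qq (y : ℝ) : ℝ := y^2 + (Real.sqrt 3 - 1)/2*y + Real.sqrt 3/8

lemma s3_sq : Real.sqrt 3 ^ 2 = 3 := Real.sq_sqrt (by norm_num)

lemma s3_gt : 1 < Real.sqrt 3 := by
  nlinarith [Real.sqrt_nonneg 3, s3_sq]

lemma s3_lt : Real.sqrt 3 < 2 := by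
  nlinarith [Real.sqrt_nonneg 3, s3_sq]

lemma ystar_gt : (1:ℝ) < ystar := by unfold ystar; nlinarith [s3_gt]

lemma ystar_lt : ystar < 3/2 := by unfold ystar; nlinarith [s3_lt]

lemma ystar_gt_half : (1/2:ℝ) < ystar := lt_trans (by norm_num) ystar_gt

lemma key (y : ℝ) :
    Qp y = (9 + 6*Real.sqrt 3)/64 - (y - ystar)^2 * qq y := by
  have hs : Real.sqrt 3 ^ 2 = 3 := s3_sq
  unfold Qp qq ystar
  linear_combination (Real.sqrt 3*y/32 + Real.sqrt 3/128 - 3*y^2/16 + 3*y/32 + 3/64) * hs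

lemma Qp_ystar : Qp ystar = (9 + 6*Real.sqrt 3)/64 := by
  rw [key]; ring

lemma g_eq_sqrt {y : ℝ} (hy : 0 ≤ y) : gEx6 y = Real.sqrt (Qp y) := by
  have h1 : Qp y = (y/2)^2 * ((2*y-1)*(3-2*y)) := by unfold Qp; ring
  rw [gEx6, h1, Real.sqrt_mul (sq_nonneg _), Real.sqrt_sq (by linarith : (0:ℝ) ≤ y/2)]

lemma Qp_nonneg {y : ℝ} (h1 : 1/2 ≤ y) (h2 : y ≤ 3/2) : 0 ≤ Qp y := by
  have heq : Qp y = y^2 * ((2*y-1)*(3-2*y))/4 := by unfold Qp; ring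
  rw [heq]
  have h5 : 0 ≤ y^2 * ((2*y-1)*(3-2*y)) :=
    mul_nonneg (sq_nonneg y) (mul_nonneg (by linarith) (by linarith))
  linarith

lemma Qp_pos {y : ℝ} (h1 : 1/2 < y) (h2 : y < 3/2) : 0 < Qp y := by
  have heq : Qp y = y^2 * ((2*y-1)*(3-2*y))/4 := by unfold Qp; ring
  rw [heq]
  have h5 : 0 < y^2 * ((2*y-1)*(3-2*y)) :=
    mul_pos (pow_pos (by linarith) 2) (mul_pos (by linarith) (by linarith))
  linarith

lemma Qp_hasDeriv (y : ℝ) :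
    HasDerivAt Qp (-4*y*(y - (3 - Real.sqrt 3)/4)*(y - ystar)) y := by
  have h := (((hasDerivAt_pow 4 y).neg).add ((hasDerivAt_pow 3 y).const_mul 2)).sub
    ((hasDerivAt_pow 2 y).const_mul (3/4))
  have h2 : HasDerivAt (fun y : ℝ => -y^4 + 2*y^3 - 3/4*y^2)
      (-(4*y^3) + 2*(3*y^2) - 3/4*(2*y)) y := by
    have e : (fun y : ℝ => -y^4 + 2*y^3 - 3/4*y^2)
        = (((-fun x : ℝ => x ^ 4) + fun y => 2 * y ^ 3) - fun y => 3 / 4 * y ^ 2) := by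
      funext z; rfl
    rw [e]
    refine h.congr_deriv ?_
    norm_num
  have heq : -(4*y^3) + 2*(3*y^2) - 3/4*(2*y)
      = -4*y*(y - (3 - Real.sqrt 3)/4)*(y - ystar) := by
    unfold ystar
    linear_combination (-(y/4)) * s3_sq
  rw [heq] at h2
  exact h2

lemma Qp_cont : Continuous Qp := by
  unfold Qp; continuity

lemma Qp_mono : StrictMonoOn Qp (Icc (1/2) ystar) := by
  apply strictMonoOn_of_deriv_pos (convex_Icc _ _) Qp_cont.continuousOn
  intro x hx
  rw [interior_Icc] at hx
  rw [(Qp_hasDeriv x).deriv]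
  have h1 : (0:ℝ) < x := lt_trans (by norm_num) hx.1
  have h2 : (3 - Real.sqrt 3)/4 < x := by linarith [s3_gt, hx.1]
  have h3 : x < ystar := hx.2
  have h5 : 0 < (4*x) * (x - (3 - Real.sqrt 3)/4) * (ystar - x) :=
    mul_pos (mul_pos (by linarith) (by linarith)) (by linarith)
  nlinarith [h5]

lemma Qp_anti : StrictAntiOn Qp (Icc ystar (3/2)) := by
  apply strictAntiOn_of_deriv_neg (convex_Icc _ _) Qp_cont.continuousOn
  intro x hx
  rw [interior_Icc] at hx
  rw [(Qp_hasDeriv x).deriv]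
  have h0 : (1:ℝ) < ystar := ystar_gt
  have h1 : (0:ℝ) < x := lt_trans (by linarith) hx.1
  have h3 : ystar < x := hx.1
  have h2 : (3 - Real.sqrt 3)/4 < x := by linarith [s3_gt]
  have h5 : 0 < (4*x) * (x - (3 - Real.sqrt 3)/4) * (x - ystar) :=
    mul_pos (mul_pos (by linarith) (by linarith)) (by linarith)
  nlinarith [h5]

lemma g_mono : StrictMonoOn gEx6 (Icc (1/2) ystar) := by
  intro a ha b hb hab
  obtain ⟨ha1, ha2⟩ := ha
  obtain ⟨hb1, hb2⟩ := hb
  rw [g_eq_sqrt (by linarith), g_eq_sqrt (by linarith)]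
  exact Real.sqrt_lt_sqrt (Qp_nonneg ha1 (le_trans ha2 ystar_lt.le)) (Qp_mono ⟨ha1, ha2⟩ ⟨hb1, hb2⟩ hab)

lemma g_anti : StrictAntiOn gEx6 (Icc ystar (3/2)) := by
  intro a ha b hb hab
  obtain ⟨ha1, ha2⟩ := ha
  obtain ⟨hb1, hb2⟩ := hb
  have hh := ystar_gt_half
  rw [g_eq_sqrt (by linarith), g_eq_sqrt (by linarith)]
  exact Real.sqrt_lt_sqrt (Qp_nonneg (by linarith) hb2) (Qp_anti ⟨ha1, ha2⟩ ⟨hb1, hb2⟩ hab)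

lemma beta_exists {u : ℝ} (hu : u ∈ Ioo (1/2 : ℝ) ystar) :
    ∃ v, v ∈ Ioo ystar (3/2 : ℝ) ∧ Qp v = Qp u := by
  have h32 : Qp (3/2) = 0 := by unfold Qp; norm_num
  have hupos : 0 < Qp u := Qp_pos hu.1 (lt_trans hu.2 ystar_lt)
  have hult : Qp u < Qp ystar :=
    Qp_mono ⟨hu.1.le, hu.2.le⟩ ⟨ystar_gt_half.le, le_refl _⟩ hu.2
  have := intermediate_value_Ioo' (ystar_lt.le) Qp_cont.continuousOn
    (a := ystar) (b := 3/2)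
  have hmem : Qp u ∈ Ioo (Qp (3/2)) (Qp ystar) := ⟨by rw [h32]; exact hupos, hult⟩
  obtain ⟨v, hv, hvq⟩ := this hmem
  exact ⟨v, hv, hvq⟩

open Classical in
noncomputable def betaEx6 (u : ℝ) : ℝ :=
  if h : ∃ v, v ∈ Ioo ystar (3/2 : ℝ) ∧ Qp v = Qp u then h.choose else ystar

lemma beta_spec {u : ℝ} (hu : u ∈ Ioo (1/2 : ℝ) ystar) :
    betaEx6 u ∈ Ioo ystar (3/2 : ℝ) ∧ Qp (betaEx6 u) = Qp u := by
  unfold betaEx6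
  rw [dif_pos (beta_exists hu)]
  exact (beta_exists hu).choose_spec

lemma qq_pos {y : ℝ} (hy : 0 ≤ y) : 0 < qq y := by
  unfold qq
  nlinarith [s3_gt, sq_nonneg y]

theorem stmt_16 :
    StrictMonoOn gEx6 (Icc (1/2) ystar) ∧
    StrictAntiOn gEx6 (Icc ystar (3/2)) ∧
    ∃ β : ℝ → ℝ,
      (∀ u ∈ Ioo (1/2 : ℝ) ystar, β u ∈ Ioo ystar (3/2) ∧ gEx6 (β u) = gEx6 u) ∧
      (∀ β' : ℝ → ℝ,
        (∀ u ∈ Ioo (1/2 : ℝ) ystar, β' u ∈ Ioo ystar (3/2) ∧ gEx6 (β' u) = gEx6 u) →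
        ∀ u ∈ Ioo (1/2 : ℝ) ystar, β' u = β u) ∧
      Tendsto (fun u => (β u - ystar) / (u - ystar))
        (nhdsWithin ystar (Iio ystar)) (nhds (-1)) := by
  refine ⟨g_mono, g_anti, betaEx6, ?_, ?_, ?_⟩
  · intro u hu
    obtain ⟨hmem, hq⟩ := beta_spec hu
    refine ⟨hmem, ?_⟩
    rw [g_eq_sqrt (by linarith [ystar_gt_half, hmem.1] : (0:ℝ) ≤ betaEx6 u),
        g_eq_sqrt (by linarith [hu.1] : (0:ℝ) ≤ u), hq]
  · intro β' hβ' u hu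
    obtain ⟨hmem', hg'⟩ := hβ' u hu
    obtain ⟨hmem, hq⟩ := beta_spec hu
    -- Qp (β' u) = Qp u from g equality
    have h0' : (0:ℝ) ≤ β' u := by linarith [ystar_gt_half, hmem'.1]
    have hq' : Qp (β' u) = Qp u := by
      have h1 : Real.sqrt (Qp (β' u)) = Real.sqrt (Qp u) := by
        rw [← g_eq_sqrt h0', ← g_eq_sqrt (by linarith [hu.1] : (0:ℝ) ≤ u), hg']
      have hn1 : 0 ≤ Qp (β' u) := Qp_nonneg (by linarith [ystar_gt_half, hmem'.1]) hmem'.2.le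
      have hn2 : 0 ≤ Qp u := Qp_nonneg hu.1.le (by linarith [hu.2, ystar_lt])
      calc Qp (β' u) = Real.sqrt (Qp (β' u)) ^ 2 := (Real.sq_sqrt hn1).symm
        _ = Real.sqrt (Qp u) ^ 2 := by rw [h1]
        _ = Qp u := Real.sq_sqrt hn2
    exact Qp_anti.injOn ⟨hmem'.1.le, hmem'.2.le⟩ ⟨hmem.1.le, hmem.2.le⟩ (hq'.trans hq.symm)
  · -- the limit
    have hIoo_mem : Ioo (1/2 : ℝ) ystar ∈ nhdsWithin ystar (Iio ystar) :=
      Ioo_mem_nhdsLT ystar_gt_half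
    -- β tends to ystar from the right
    have hβnhds : Tendsto betaEx6 (nhdsWithin ystar (Iio ystar)) (nhds ystar) := by
      rw [tendsto_order]
      constructor
      · intro a ha
        filter_upwards [hIoo_mem] with u hu
        exact lt_trans ha (beta_spec hu).1.1
      · intro b hb
        by_cases hb2 : b ≤ 3/2
        swap
        · filter_upwards [hIoo_mem] with u hu
          exact lt_trans (beta_spec hu).1.2 (by linarith)
        · -- ystar < b ≤ 3/2
          have hQb : Qp b < Qp ystar := by
            rcases eq_or_lt_of_le hb2 with h | h
            · rw [h]
              have : Qp (3/2) = 0 := by unfold Qp; norm_num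
              rw [this, Qp_ystar]; nlinarith [s3_gt]
            · exact Qp_anti ⟨le_refl _, ystar_lt.le⟩ ⟨hb.le, hb2⟩ hb
          have hev : ∀ᶠ u in nhdsWithin ystar (Iio ystar), Qp b < Qp u :=
            (Qp_cont.continuousAt.tendsto.mono_left nhdsWithin_le_nhds).eventually
              (eventually_gt_nhds hQb)
          filter_upwards [hIoo_mem, hev] with u hu hQu
          by_contra hc
          push_neg at hc
          have h1 : Qp (betaEx6 u) ≤ Qp b := by
            rcases eq_or_lt_of_le hc with h | h
            · rw [h]
            · exact (Qp_anti ⟨hb.le, hb2⟩ ⟨(beta_spec hu).1.1.le, (beta_spec hu).1.2.le⟩ h).le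
          rw [(beta_spec hu).2] at h1
          linarith
    have hβgt : ∀ᶠ u in nhdsWithin ystar (Iio ystar), ystar < betaEx6 u := by
      filter_upwards [hIoo_mem] with u hu
      exact (beta_spec hu).1.1
    -- eventual formula for the ratio
    have hev : ∀ᶠ u in nhdsWithin ystar (Iio ystar),
        (betaEx6 u - ystar) / (u - ystar) = -Real.sqrt (qq u / qq (betaEx6 u)) := by
      filter_upwards [hIoo_mem] with u hu
      set v := betaEx6 u with hv
      obtain ⟨hmem, hq⟩ := beta_spec hu
      have hvq : 0 < qq v := qq_pos (by linarith [ystar_gt_half, hmem.1])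
      have huq : 0 < qq u := qq_pos (by linarith [hu.1])
      have hident : (v - ystar)^2 * qq v = (u - ystar)^2 * qq u := by
        have k1 := key v
        have k2 := key u
        rw [k1, k2] at hq
        linarith
      have hratio : qq u / qq v = ((v - ystar)/(u - ystar))^2 := by
        have hune : u - ystar ≠ 0 := by
          have := hu.2; intro h; apply absurd this; simp [sub_eq_zero.mp h]
        field_simp
        linarith [hident]
      rw [hratio, Real.sqrt_sq_eq_abs]
      have hneg : (v - ystar)/(u - ystar) < 0 := by
        apply div_neg_of_pos_of_neg
        · linarith [hmem.1]
        · linarith [hu.2]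
      rw [abs_of_neg hneg]; ring
    -- the limit of the sqrt expression
    have hqu : Tendsto (fun u => qq u) (nhdsWithin ystar (Iio ystar)) (nhds (qq ystar)) := by
      have : Continuous qq := by unfold qq; continuity
      exact (this.continuousAt.tendsto).mono_left nhdsWithin_le_nhds
    have hqv : Tendsto (fun u => qq (betaEx6 u)) (nhdsWithin ystar (Iio ystar))
        (nhds (qq ystar)) := by
      have : Continuous qq := by unfold qq; continuity
      exact (this.continuousAt.tendsto).comp hβnhds
    have hqystar : qq ystar ≠ 0 := (qq_pos (by linarith [ystar_gt_half])).ne'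
    have hdiv : Tendsto (fun u => qq u / qq (betaEx6 u)) (nhdsWithin ystar (Iio ystar))
        (nhds 1) := by
      have := hqu.div hqv hqystar
      rwa [div_self hqystar] at this
    have hsqrt : Tendsto (fun u => -Real.sqrt (qq u / qq (betaEx6 u)))
        (nhdsWithin ystar (Iio ystar)) (nhds (-1)) := by
      have h1 : Tendsto (fun u => Real.sqrt (qq u / qq (betaEx6 u)))
          (nhdsWithin ystar (Iio ystar)) (nhds (Real.sqrt 1)) :=
        (Real.continuous_sqrt.continuousAt.tendsto).comp hdiv
      rw [Real.sqrt_one] at h1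
      exact h1.neg
    exact Tendsto.congr' (hev.mono fun u hu => hu.symm) hsqrt
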